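/- Let G be a group, T a normal abelian subgroup of G of finite index, H a subgroup of G with H ≤ T, and a ∈ G. Then the union of the conjugates of the coset a·H, namely the set { g·(a·h)·g⁻¹ : g ∈ G, h ∈ H }, is a finite union of left cosets of subgroups of G: there exist finitely many elements c_1, …, c_m of G and subgroups K_1, …, K_m of G (each contained in T) such that { g·(a·h)·g⁻¹ : g ∈ G, h ∈ H } = ⋃_{i=1}^{m} c_i·K_i. -/

import Mathlib

theorem stmt_8 (G : Type*) [Group G] (T : Subgroup G) (hN : T.Normal)
    (hab : ∀ x ∈ T, ∀ y ∈ T, x * y = y * x) (hfi : T.FiniteIndex)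
    (H : Subgroup G) (hHT : H ≤ T) (a : G) :
    ∃ (m : ℕ) (c : Fin m → G) (K : Fin m → Subgroup G),
      (∀ i, K i ≤ T) ∧
      {x | ∃ g : G, ∃ h ∈ H, x = g * (a * h) * g⁻¹} =
        ⋃ i, {x | ∃ k ∈ K i, x = c i * k} := by
  classical
  have hconj : ∀ t ∈ T, a⁻¹ * t * a ∈ T := fun t ht => by
    simpa [mul_assoc] using hN.conj_mem t ht a⁻¹
  -- the homomorphism t ↦ a⁻¹ t a t⁻¹ on T
  set f : ↥T →* G :=
    { toFun := fun t => a⁻¹ * (t : G) * a * (t : G)⁻¹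
      map_one' := by simp
      map_mul' := by
        rintro ⟨s, hs⟩ ⟨t, ht⟩
        have h1 : a⁻¹ * t * a * t⁻¹ ∈ T := mul_mem (hconj t ht) (inv_mem ht)
        have h2 := hab _ h1 _ (inv_mem hs)
        simp only [Subgroup.coe_mul]
        rw [show a⁻¹ * (s * t) * a * (s * t)⁻¹
            = (a⁻¹ * s * a) * ((a⁻¹ * t * a * t⁻¹) * s⁻¹) from by group, h2]
        group } with hf
  set R : Subgroup G := f.range with hR
  have hRT : R ≤ T := by
    rintro _ ⟨⟨t, ht⟩, rfl⟩
    exact mul_mem (hconj t ht) (inv_mem ht)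
  set L : Subgroup G := R ⊔ H with hLdef
  have hLT : L ≤ T := sup_le hRT hHT
  -- the product set R * H is a subgroup, hence equals L
  set P : Subgroup G :=
    { carrier := {x | ∃ r ∈ R, ∃ h ∈ H, x = r * h}
      one_mem' := ⟨1, one_mem _, 1, one_mem _, by simp⟩
      mul_mem' := by
        rintro x y ⟨r1, hr1, h1, hh1, rfl⟩ ⟨r2, hr2, h2, hh2, rfl⟩
        refine ⟨r1 * r2, mul_mem hr1 hr2, h1 * h2, mul_mem hh1 hh2, ?_⟩
        have hc := hab _ (hHT hh1) _ (hRT hr2)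
        rw [show r1 * h1 * (r2 * h2) = r1 * (h1 * r2) * h2 from by group, hc]
        group
      inv_mem' := by
        rintro x ⟨r, hr, h, hh, rfl⟩
        refine ⟨r⁻¹, inv_mem hr, h⁻¹, inv_mem hh, ?_⟩
        have hc := hab _ (inv_mem (hRT hr)) _ (inv_mem (hHT hh))
        rw [mul_inv_rev, hc] } with hP
  have hLP : ∀ x ∈ L, ∃ r ∈ R, ∃ h ∈ H, x = r * h := by
    intro x hx
    have : L ≤ P := sup_le
      (fun r hr => ⟨r, hr, 1, one_mem _, by simp⟩)
      (fun h hh => ⟨1, one_mem _, h, hh, by simp⟩)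
    exact this hx
  -- key computation
  have key : ∀ (b t h : G), t⁻¹ * h = h * t⁻¹ →
      (b * t) * (a * h) * (b * t)⁻¹
        = (b * a * b⁻¹) * (b * ((a⁻¹ * t * a * t⁻¹) * h) * b⁻¹) := by
    intro b t h hc
    rw [show (b * t) * (a * h) * (b * t)⁻¹
        = b * (t * (a * (h * t⁻¹))) * b⁻¹ from by group, ← hc]
    group
  -- index the cosets
  haveI : Finite (G ⧸ T) := T.finite_quotient_of_finiteIndex
  haveI : Fintype (G ⧸ T) := Fintype.ofFinite _
  set m : ℕ := Fintype.card (G ⧸ T) with hm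
  set e : Fin m ≃ G ⧸ T := (Fintype.equivFin (G ⧸ T)).symm with he
  set b : Fin m → G := fun i => Quotient.out (e i) with hb
  refine ⟨m, fun i => b i * a * (b i)⁻¹,
    fun i => L.map (MulAut.conj (b i)).toMonoidHom, ?_, ?_⟩
  · rintro i x ⟨y, hy, rfl⟩
    exact hN.conj_mem y (hLT hy) (b i)
  · ext x
    simp only [Set.mem_setOf_eq, Set.mem_iUnion]
    constructor
    · rintro ⟨g, h, hh, rfl⟩
      set i : Fin m := e.symm (QuotientGroup.mk g) with hi
      have hbi : QuotientGroup.mk (b i) = (QuotientGroup.mk g : G ⧸ T) := by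
        simp only [hb, hi, Equiv.apply_symm_apply]
        exact QuotientGroup.out_eq' _
      have ht : (b i)⁻¹ * g ∈ T := (QuotientGroup.eq).mp hbi
      set t : G := (b i)⁻¹ * g with htdef
      have hg : g = b i * t := by rw [htdef]; group
      have hrR : a⁻¹ * t * a * t⁻¹ ∈ R := ⟨⟨t, ht⟩, rfl⟩
      refine ⟨i, b i * ((a⁻¹ * t * a * t⁻¹) * h) * (b i)⁻¹,
        ⟨(a⁻¹ * t * a * t⁻¹) * h,
          mul_mem (le_sup_left (a := R) (b := H) hrR)
            (le_sup_right (a := R) (b := H) hh), rfl⟩, ?_⟩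
      rw [hg]
      exact key (b i) t h (hab _ (inv_mem ht) _ (hHT hh))
    · rintro ⟨i, _, ⟨k, hk, rfl⟩, rfl⟩
      obtain ⟨r, hr, h, hh, rfl⟩ := hLP k hk
      obtain ⟨⟨t, ht⟩, rfl⟩ := hr
      refine ⟨b i * t, h, hh, ?_⟩
      simp only [MulEquiv.coe_toMonoidHom, MulAut.conj_apply]
      exact (key (b i) t h (hab _ (inv_mem ht) _ (hHT hh))).symm
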